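/- Let N ≥ 1, let c, τ > 0, let σ be the uniform probability measure on the unit sphere S^{N−1} of ℝ^N, and for R ≥ 0 define (T_R u)(x) := ∫_{S^{N−1}} u(x + R·y) dσ(y). Let u : ℝ^N → ℝ be continuously differentiable and bounded with bounded gradient, and define the causal diffusion v by v(x,0) := u(x) and v(x,t) := (T_{R(t)}((T_{cτ})^{n(t)} u))(x) for t > 0, where n(t) is the unique m ∈ ℕ with mτ < t ≤ (m+1)τ and R(t) := c(t − n(t)τ). Then for every x ∈ ℝ^N and every m ∈ ℕ, the map t ↦ v(x,t) has right-hand derivative 0 at t = m·τ; that is, lim_{s→0+} (v(x, mτ + s) − v(x, mτ))/s = 0. -/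

import Mathlib

open MeasureTheory
open scoped ENNReal NNReal Pointwise

/-- The uniform probability measure on the unit sphere of `ℝ^N`, viewed as a measure
on `ℝ^N` (the normalized surface measure, pushed forward along the inclusion). -/
noncomputable def sphereUniform (N : ℕ) : Measure (EuclideanSpace ℝ (Fin N)) :=
  ((volume : Measure (EuclideanSpace ℝ (Fin N))).toSphere Set.univ)⁻¹ •
    Measure.map (Subtype.val : Metric.sphere (0 : EuclideanSpace ℝ (Fin N)) 1 → _)
      (volume : Measure (EuclideanSpace ℝ (Fin N))).toSphere

/-- The spherical mean operator `(T_R u)(x) = ∫_{S^{N-1}} u (x + R y) dσ(y)`. -/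
noncomputable def sphMean (N : ℕ) (R : ℝ) (u : EuclideanSpace ℝ (Fin N) → ℝ)
    (x : EuclideanSpace ℝ (Fin N)) : ℝ :=
  ∫ y, u (x + R • y) ∂(sphereUniform N)
/-- For `t, τ > 0`, the unique `m ∈ ℕ` with `m τ < t ≤ (m+1) τ`. -/
noncomputable def stepIndex (τ t : ℝ) : ℕ := ⌈t / τ⌉₊ - 1

/-- The causal diffusion model with speed `c` and period `τ`:
`v(x,t) = (T_{R(t)} ((T_{cτ})^{n(t)} u)) x` for `t > 0` (where `n(t)` is the unique
natural number with `n(t) τ < t ≤ (n(t)+1) τ` and `R(t) = c (t - n(t) τ)`), and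
`v(x,0) = u(x)`. -/
noncomputable def causalDiffusion (N : ℕ) (c τ : ℝ) (u : EuclideanSpace ℝ (Fin N) → ℝ)
    (x : EuclideanSpace ℝ (Fin N)) (t : ℝ) : ℝ :=
  if t ≤ 0 then u x
  else sphMean N (c * (t - stepIndex τ t * τ)) ((sphMean N (c * τ))^[stepIndex τ t] u) x
section Helpers
variable {N : ℕ}


lemma toSphere_univ_pos (hN : 1 ≤ N) :
    0 < (volume : Measure (EuclideanSpace ℝ (Fin N))).toSphere Set.univ := by
  have : Nontrivial (EuclideanSpace ℝ (Fin N)) := by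
    have : Nonempty (Fin N) := ⟨⟨0, hN⟩⟩
    infer_instance
  rw [Measure.toSphere_apply_univ]
  have h1 : (0:ℝ≥0∞) < Module.finrank ℝ (EuclideanSpace ℝ (Fin N)) := by
    have := Module.finrank_pos (R := ℝ) (M := EuclideanSpace ℝ (Fin N))
    exact_mod_cast this
  exact ENNReal.mul_pos h1.ne' (Metric.measure_ball_pos _ _ one_pos).ne'

lemma toSphere_univ_lt_top :
    (volume : Measure (EuclideanSpace ℝ (Fin N))).toSphere Set.univ < ⊤ :=
  measure_lt_top _ _

lemma sphereUniform_prob (hN : 1 ≤ N) : IsProbabilityMeasure (sphereUniform N) := by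
  constructor
  rw [sphereUniform, Measure.smul_apply, Measure.map_apply measurable_subtype_coe .univ]
  simp only [Set.preimage_univ]
  rw [smul_eq_mul, ENNReal.inv_mul_cancel (toSphere_univ_pos hN).ne' toSphere_univ_lt_top.ne]

lemma sphereUniform_ae_norm : ∀ᵐ y ∂(sphereUniform N), ‖y‖ = 1 := by
  rcases eq_or_ne ((volume : Measure (EuclideanSpace ℝ (Fin N))).toSphere Set.univ)⁻¹ 0 with h | h
  · rw [sphereUniform, h, zero_smul]; simp
  rw [sphereUniform, Measure.ae_ennreal_smul_measure_eq h,
    (MeasurableEmbedding.subtype_coe Metric.isClosed_sphere.measurableSet).ae_map_iff]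
  filter_upwards with y
  simp [y.2]

lemma map_neg_toSphereCoe :
    Measure.map (fun y : EuclideanSpace ℝ (Fin N) => -y)
      (Measure.map (Subtype.val : Metric.sphere (0 : EuclideanSpace ℝ (Fin N)) 1 → _)
        (volume : Measure (EuclideanSpace ℝ (Fin N))).toSphere) =
    Measure.map (Subtype.val : Metric.sphere (0 : EuclideanSpace ℝ (Fin N)) 1 → _)
      (volume : Measure (EuclideanSpace ℝ (Fin N))).toSphere := by
  set μs := Measure.map (Subtype.val : Metric.sphere (0 : EuclideanSpace ℝ (Fin N)) 1 → _)
      (volume : Measure (EuclideanSpace ℝ (Fin N))).toSphere with hμs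
  have hval : Measurable (Subtype.val : Metric.sphere (0 : EuclideanSpace ℝ (Fin N)) 1 → _) :=
    measurable_subtype_coe
  have hneg : Measurable (fun y : EuclideanSpace ℝ (Fin N) => -y) := measurable_neg
  ext s hs
  rw [Measure.map_apply hneg hs, hμs, Measure.map_apply hval (hneg hs),
    Measure.map_apply hval hs]
  have h1 : ∀ t : Set (EuclideanSpace ℝ (Fin N)), MeasurableSet t →
      (volume : Measure (EuclideanSpace ℝ (Fin N))).toSphere (Subtype.val ⁻¹' t)
        = Module.finrank ℝ (EuclideanSpace ℝ (Fin N)) *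
          volume (Set.Ioo (0:ℝ) 1 • (t ∩ Metric.sphere 0 1)) := by
    intro t ht
    rw [Measure.toSphere_apply' _ (hval ht)]
    congr 2
    rw [Set.image_preimage_eq_inter_range, Subtype.range_coe]
  rw [h1 _ (hneg hs), h1 _ hs]
  congr 1
  have h2 : ((fun y : EuclideanSpace ℝ (Fin N) => -y) ⁻¹' s) ∩ Metric.sphere 0 1
      = -(s ∩ Metric.sphere 0 1) := by
    ext z
    simp only [Set.mem_inter_iff, Set.mem_preimage, Set.mem_neg]
    constructor
    · rintro ⟨h1', h2'⟩; exact ⟨by simpa using h1', by simpa using h2'⟩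
    · rintro ⟨h1', h2'⟩
      refine ⟨by simpa using h1', ?_⟩
      simpa using h2'
  rw [h2]
  have h3 : Set.Ioo (0:ℝ) 1 • (-(s ∩ Metric.sphere 0 1))
      = -(Set.Ioo (0:ℝ) 1 • (s ∩ Metric.sphere 0 1)) := by
    ext z
    simp only [Set.mem_smul, Set.mem_neg]
    constructor
    · rintro ⟨r, hr, a, ha, rfl⟩
      exact ⟨r, hr, -a, by simpa using ha, by simp⟩
    · rintro ⟨r, hr, a, ha, hra⟩
      exact ⟨r, hr, -a, by simpa using ha, by rw [smul_neg, hra, neg_neg]⟩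
  rw [h3, Measure.measure_neg]

lemma sphereUniform_map_neg :
    Measure.map (fun y : EuclideanSpace ℝ (Fin N) => -y) (sphereUniform N) = sphereUniform N := by
  rw [sphereUniform, Measure.map_smul, map_neg_toSphereCoe]

instance sphereUniform_finite : IsFiniteMeasure (sphereUniform N) := by
  constructor
  rw [sphereUniform, Measure.smul_apply, Measure.map_apply measurable_subtype_coe .univ,
    smul_eq_mul, Set.preimage_univ]
  rcases eq_or_ne ((volume : Measure (EuclideanSpace ℝ (Fin N))).toSphere Set.univ) 0 with h | h
  · rw [h, mul_zero]; exact ENNReal.zero_lt_top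
  · calc _ ≤ ((volume : Measure (EuclideanSpace ℝ (Fin N))).toSphere Set.univ)⁻¹ *
        (volume : Measure (EuclideanSpace ℝ (Fin N))).toSphere Set.univ := le_rfl
    _ = 1 := ENNReal.inv_mul_cancel h (measure_lt_top _ _).ne
    _ < ⊤ := ENNReal.one_lt_top

lemma integrable_of_bdd {f : EuclideanSpace ℝ (Fin N) → ℝ} (hf : Continuous f)
    {C : ℝ} (hC : ∀ y, |f y| ≤ C) : Integrable f (sphereUniform N) := by
  refine ⟨hf.aestronglyMeasurable, ?_⟩
  exact HasFiniteIntegral.of_bounded (C := C) (Filter.Eventually.of_forall fun y => hC y)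

lemma integrable_id_sphereUniform :
    Integrable (fun y : EuclideanSpace ℝ (Fin N) => y) (sphereUniform N) := by
  refine ⟨continuous_id.aestronglyMeasurable, ?_⟩
  apply HasFiniteIntegral.of_bounded (C := (1:ℝ))
  filter_upwards [sphereUniform_ae_norm] with y hy
  simp [hy]

lemma integral_id_sphereUniform :
    (∫ y, y ∂(sphereUniform N)) = (0 : EuclideanSpace ℝ (Fin N)) := by
  have h1 : (∫ y, y ∂(sphereUniform N)) = ∫ y, -y ∂(sphereUniform N) := by
    conv_lhs => rw [← sphereUniform_map_neg (N := N)]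
    exact integral_map measurable_neg.aemeasurable continuous_id.aestronglyMeasurable
  rw [integral_neg] at h1
  have := eq_neg_iff_add_eq_zero.mp h1
  have h2 : (2:ℝ) • (∫ y, y ∂(sphereUniform N)) = 0 := by
    rw [two_smul]; exact this
  simpa using (smul_eq_zero.mp h2).resolve_left (by norm_num)


open Filter Set

variable (hN : 1 ≤ N)
include hN

-- Lipschitz bound preserved
lemma sphMean_lip {w : EuclideanSpace ℝ (Fin N) → ℝ} {C : ℝ} (hwc : Continuous w)
    {C₀ : ℝ} (hwb : ∀ z, |w z| ≤ C₀)
    (hwL : ∀ a b, |w a - w b| ≤ C * ‖a - b‖) (R : ℝ) :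
    ∀ a b, |sphMean N R w a - sphMean N R w b| ≤ C * ‖a - b‖ := by
  haveI := sphereUniform_prob hN
  intro a b
  have hia : Integrable (fun y => w (a + R • y)) (sphereUniform N) :=
    integrable_of_bdd (hwc.comp (continuous_const.add (continuous_const_smul _))) (fun y => hwb _)
  have hib : Integrable (fun y => w (b + R • y)) (sphereUniform N) :=
    integrable_of_bdd (hwc.comp (continuous_const.add (continuous_const_smul _))) (fun y => hwb _)
  rw [sphMean, sphMean, ← integral_sub hia hib]
  calc |∫ y, (w (a + R • y) - w (b + R • y)) ∂(sphereUniform N)|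
      ≤ ∫ y, |w (a + R • y) - w (b + R • y)| ∂(sphereUniform N) := by
        simpa [Real.norm_eq_abs] using
          norm_integral_le_integral_norm (μ := sphereUniform N)
            (fun y => w (a + R • y) - w (b + R • y))
    _ ≤ ∫ _y, C * ‖a - b‖ ∂(sphereUniform N) := by
        apply integral_mono_of_nonneg (Filter.Eventually.of_forall fun y => abs_nonneg _)
          (integrable_const _)
        filter_upwards with y
        have := hwL (a + R • y) (b + R • y)
        simpa [add_sub_add_right_eq_sub] using this
    _ = C * ‖a - b‖ := by simp

lemma sphMean_bdd {w : EuclideanSpace ℝ (Fin N) → ℝ} (hwc : Continuous w)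
    {C₀ : ℝ} (hwb : ∀ z, |w z| ≤ C₀) (R : ℝ) :
    ∀ z, |sphMean N R w z| ≤ C₀ := by
  haveI := sphereUniform_prob hN
  intro z
  calc |sphMean N R w z| ≤ ∫ y, |w (z + R • y)| ∂(sphereUniform N) := by
        simpa [Real.norm_eq_abs, sphMean] using
          norm_integral_le_integral_norm (μ := sphereUniform N) (fun y => w (z + R • y))
    _ ≤ ∫ _y, C₀ ∂(sphereUniform N) := by
        apply integral_mono_of_nonneg (Filter.Eventually.of_forall fun y => abs_nonneg _)
          (integrable_const _)
        filter_upwards with y using hwb _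
    _ = C₀ := by simp

lemma sphMean_comm {w : EuclideanSpace ℝ (Fin N) → ℝ} (hwc : Continuous w)
    {C₀ : ℝ} (hwb : ∀ z, |w z| ≤ C₀) (R R' : ℝ) (p : EuclideanSpace ℝ (Fin N)) :
    sphMean N R (sphMean N R' w) p = ∫ z, sphMean N R w (p + R' • z) ∂(sphereUniform N) := by
  haveI := sphereUniform_prob hN
  have hcont : Continuous (fun q : (EuclideanSpace ℝ (Fin N)) × (EuclideanSpace ℝ (Fin N)) =>
      w (p + R • q.1 + R' • q.2)) := by
    apply hwc.comp
    exact (continuous_const.add (continuous_fst.const_smul R)).add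
      (continuous_snd.const_smul R')
  have hint : Integrable (Function.uncurry (fun y z => w (p + R • y + R' • z)))
      ((sphereUniform N).prod (sphereUniform N)) := by
    refine ⟨hcont.aestronglyMeasurable, ?_⟩
    exact HasFiniteIntegral.of_bounded (C := C₀) (Filter.Eventually.of_forall fun q => hwb _)
  calc sphMean N R (sphMean N R' w) p
      = ∫ y, ∫ z, w (p + R • y + R' • z) ∂(sphereUniform N) ∂(sphereUniform N) := rfl
    _ = ∫ z, ∫ y, w (p + R • y + R' • z) ∂(sphereUniform N) ∂(sphereUniform N) :=
        integral_integral_swap hint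
    _ = ∫ z, sphMean N R w (p + R' • z) ∂(sphereUniform N) := by
        congr 1; funext z
        rw [sphMean]
        congr 1; funext y
        rw [add_right_comm]

lemma sphMean_sub_bound {w : EuclideanSpace ℝ (Fin N) → ℝ} (hwc : Continuous w)
    {C₀ C : ℝ} (hwb : ∀ z, |w z| ≤ C₀)
    (hwL : ∀ a b, |w a - w b| ≤ C * ‖a - b‖) (R : ℝ) (q : EuclideanSpace ℝ (Fin N)) :
    |sphMean N R w q - w q| ≤ C * |R| := by
  haveI := sphereUniform_prob hN
  have hi : Integrable (fun y => w (q + R • y)) (sphereUniform N) :=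
    integrable_of_bdd (hwc.comp (continuous_const.add (continuous_const_smul _)))
      (fun y => hwb _)
  have h0 : sphMean N R w q - w q = ∫ y, (w (q + R • y) - w q) ∂(sphereUniform N) := by
    rw [integral_sub hi (integrable_const _), integral_const]
    simp [sphMean]
  rw [h0]
  calc |∫ y, (w (q + R • y) - w q) ∂(sphereUniform N)|
      ≤ ∫ y, |w (q + R • y) - w q| ∂(sphereUniform N) := by
        simpa [Real.norm_eq_abs] using
          norm_integral_le_integral_norm (μ := sphereUniform N) (fun y => w (q + R • y) - w q)
    _ ≤ ∫ _y, C * |R| ∂(sphereUniform N) := by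
        apply integral_mono_of_nonneg (Filter.Eventually.of_forall fun y => abs_nonneg _)
          (integrable_const _)
        filter_upwards [sphereUniform_ae_norm] with y hy
        calc |w (q + R • y) - w q| ≤ C * ‖q + R • y - q‖ := hwL _ _
          _ = C * |R| := by rw [add_sub_cancel_left, norm_smul, hy, Real.norm_eq_abs, mul_one]
    _ = C * |R| := by simp

lemma step_tendsto {c τ : ℝ} (hc : 0 < c) (hτ : 0 < τ)
    {w : EuclideanSpace ℝ (Fin N) → ℝ} (hwc : Continuous w)
    {C₀ C : ℝ} (hwb : ∀ z, |w z| ≤ C₀)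
    (hwL : ∀ a b, |w a - w b| ≤ C * ‖a - b‖)
    (hw : ∀ p, Filter.Tendsto (fun s => (sphMean N (c*s) w p - w p)/s)
      (nhdsWithin 0 (Set.Ioi 0)) (nhds 0)) (p : EuclideanSpace ℝ (Fin N)) :
    Filter.Tendsto (fun s => (sphMean N (c*s) (sphMean N (c*τ) w) p - sphMean N (c*τ) w p)/s)
      (nhdsWithin 0 (Set.Ioi 0)) (nhds 0) := by
  haveI := sphereUniform_prob hN
  set σ := sphereUniform N
  -- the quotient equals an integral
  have hTcont : ∀ R : ℝ, Continuous (sphMean N R w) := by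
    intro R
    have : LipschitzWith (Real.toNNReal C) (sphMean N R w) := by
      apply LipschitzWith.of_dist_le_mul
      intro a b
      rw [Real.dist_eq, Real.coe_toNNReal']
      calc |sphMean N R w a - sphMean N R w b| ≤ C * ‖a - b‖ := sphMean_lip hN hwc hwb hwL R a b
        _ ≤ max C 0 * ‖a - b‖ := by
            apply mul_le_mul_of_nonneg_right (le_max_left _ _) (norm_nonneg _)
        _ = max C 0 * dist a b := by rw [dist_eq_norm]
    exact this.continuous
  have key : ∀ s : ℝ, (sphMean N (c*s) (sphMean N (c*τ) w) p - sphMean N (c*τ) w p)/s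
      = ∫ z, (sphMean N (c*s) w (p + (c*τ) • z) - w (p + (c*τ) • z))/s ∂σ := by
    intro s
    have h1 : sphMean N (c*s) (sphMean N (c*τ) w) p
        = ∫ z, sphMean N (c*s) w (p + (c*τ) • z) ∂σ := sphMean_comm hN hwc hwb _ _ p
    have h2 : sphMean N (c*τ) w p = ∫ z, w (p + (c*τ) • z) ∂σ := rfl
    have hi1 : Integrable (fun z => sphMean N (c*s) w (p + (c*τ) • z)) σ :=
      integrable_of_bdd ((hTcont _).comp
        (continuous_const.add (continuous_const_smul _)))
        (fun z => sphMean_bdd hN hwc hwb _ _)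
    have hi2 : Integrable (fun z => w (p + (c*τ) • z)) σ :=
      integrable_of_bdd (hwc.comp (continuous_const.add (continuous_const_smul _)))
        (fun z => hwb _)
    rw [h1, h2, ← integral_sub hi1 hi2, ← integral_div]
  simp only [key]
  have main : Filter.Tendsto
      (fun s => ∫ z, (sphMean N (c*s) w (p + (c*τ) • z) - w (p + (c*τ) • z))/s ∂σ)
      (nhdsWithin 0 (Set.Ioi 0)) (nhds (∫ _z, (0:ℝ) ∂σ)) := by
    apply tendsto_integral_filter_of_dominated_convergence (fun _z => C * c)
    · filter_upwards [self_mem_nhdsWithin] with s _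
      apply Continuous.aestronglyMeasurable
      exact (((hTcont _).comp (continuous_const.add (continuous_const_smul _))).sub
        (hwc.comp (continuous_const.add (continuous_const_smul _)))).div_const _
    · filter_upwards [self_mem_nhdsWithin] with s hs
      filter_upwards with z
      have hs' : (0:ℝ) < s := hs
      rw [Real.norm_eq_abs, abs_div, abs_of_pos hs', div_le_iff₀ hs']
      calc |sphMean N (c*s) w (p + (c*τ) • z) - w (p + (c*τ) • z)| ≤ C * |c*s| :=
            sphMean_sub_bound hN hwc hwb hwL _ _
        _ = C * c * s := by rw [abs_of_pos (mul_pos hc hs'), mul_assoc]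
    · exact integrable_const _
    · filter_upwards with z
      exact hw (p + (c*τ) • z)
  simpa using main

lemma base_tendsto {c : ℝ} (hc : 0 < c)
    {u : EuclideanSpace ℝ (Fin N) → ℝ} (hu : ContDiff ℝ 1 u)
    {C₀ C : ℝ} (hub : ∀ z, |u z| ≤ C₀) (hgb : ∀ z, ‖fderiv ℝ u z‖ ≤ C)
    (p : EuclideanSpace ℝ (Fin N)) :
    Filter.Tendsto (fun s => (sphMean N (c*s) u p - u p)/s)
      (nhdsWithin 0 (Set.Ioi 0)) (nhds 0) := by
  haveI := sphereUniform_prob hN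
  set σ := sphereUniform N
  have huc : Continuous u := hu.continuous
  have hdiff : ∀ z, DifferentiableAt ℝ u z := fun z => (hu.differentiable one_ne_zero).differentiableAt
  have huL : ∀ a b, |u a - u b| ≤ C * ‖a - b‖ := by
    intro a b
    have := convex_univ.norm_image_sub_le_of_norm_fderiv_le (f := u)
      (fun z _ => hdiff z) (fun z _ => hgb z) (Set.mem_univ b) (Set.mem_univ a)
    simpa [Real.norm_eq_abs] using this
  have key : ∀ s : ℝ, (sphMean N (c*s) u p - u p)/s
      = ∫ y, (u (p + (c*s) • y) - u p)/s ∂σ := by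
    intro s
    have hi : Integrable (fun y => u (p + (c*s) • y)) σ :=
      integrable_of_bdd (huc.comp (continuous_const.add (continuous_const_smul _)))
        (fun y => hub _)
    have h2 : u p = ∫ _y, u p ∂σ := by simp
    rw [sphMean]
    conv_lhs => rw [h2]
    rw [← integral_sub hi (integrable_const _), ← integral_div]
  simp only [key]
  have hlim0 : (∫ y, (fderiv ℝ u p) (c • y) ∂σ) = 0 := by
    have : ∀ y : EuclideanSpace ℝ (Fin N), (fderiv ℝ u p) (c • y) = (c • fderiv ℝ u p) y := by
      intro y; simp
    simp only [this]
    rw [ContinuousLinearMap.integral_comp_comm _ integrable_id_sphereUniform,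
      integral_id_sphereUniform, map_zero]
  have main : Filter.Tendsto (fun s => ∫ y, (u (p + (c*s) • y) - u p)/s ∂σ)
      (nhdsWithin 0 (Set.Ioi 0)) (nhds (∫ y, (fderiv ℝ u p) (c • y) ∂σ)) := by
    apply tendsto_integral_filter_of_dominated_convergence (fun _y => C * c)
    · filter_upwards [self_mem_nhdsWithin] with s _
      apply Continuous.aestronglyMeasurable
      exact ((huc.comp (continuous_const.add (continuous_const_smul _))).sub
        continuous_const).div_const _
    · filter_upwards [self_mem_nhdsWithin] with s hs
      filter_upwards [sphereUniform_ae_norm] with y hy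
      have hs' : (0:ℝ) < s := hs
      rw [Real.norm_eq_abs, abs_div, abs_of_pos hs', div_le_iff₀ hs']
      calc |u (p + (c*s) • y) - u p| ≤ C * ‖p + (c*s) • y - p‖ := huL _ _
        _ = C * c * s := by
            rw [add_sub_cancel_left, norm_smul, hy, Real.norm_eq_abs,
              abs_of_pos (mul_pos hc hs'), mul_one, mul_assoc]
    · exact integrable_const _
    · filter_upwards with y
      -- pointwise derivative limit
      have hφ : HasDerivAt (fun s : ℝ => p + s • (c • y)) (c • y) 0 := by
        have h1 : HasDerivAt (fun s : ℝ => s • (c • y)) ((1:ℝ) • (c • y)) 0 :=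
          (hasDerivAt_id 0).smul_const (c • y)
        simpa using h1.const_add p
      have hcomp : HasDerivAt (fun s : ℝ => u (p + s • (c • y))) ((fderiv ℝ u p) (c • y)) 0 := by
        have := (hdiff (p + (0:ℝ) • (c • y))).hasFDerivAt.comp_hasDerivAt 0 hφ
        simpa [Function.comp_def] using this
      have hslope := hasDerivAt_iff_tendsto_slope.mp hcomp
      have hmono : Filter.Tendsto (slope (fun s : ℝ => u (p + s • (c • y))) 0)
          (nhdsWithin 0 (Set.Ioi 0)) (nhds ((fderiv ℝ u p) (c • y))) := by
        apply hslope.mono_left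
        apply nhdsWithin_mono
        intro t ht
        exact ne_of_gt ht
      have heq : (fun s : ℝ => (u (p + (c*s) • y) - u p)/s)
          = slope (fun s : ℝ => u (p + s • (c • y))) 0 := by
        funext s
        rw [slope_def_field, mul_comm c s, mul_smul]
        simp
      rw [heq]
      exact hmono
  rw [hlim0] at main
  exact main

lemma sphMean_cont {w : EuclideanSpace ℝ (Fin N) → ℝ} (hwc : Continuous w)
    {C₀ C : ℝ} (hwb : ∀ z, |w z| ≤ C₀)
    (hwL : ∀ a b, |w a - w b| ≤ C * ‖a - b‖) (R : ℝ) :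
    Continuous (sphMean N R w) := by
  have : LipschitzWith (Real.toNNReal C) (sphMean N R w) := by
    apply LipschitzWith.of_dist_le_mul
    intro a b
    rw [Real.dist_eq, Real.coe_toNNReal']
    calc |sphMean N R w a - sphMean N R w b| ≤ C * ‖a - b‖ := sphMean_lip hN hwc hwb hwL R a b
      _ ≤ max C 0 * ‖a - b‖ :=
          mul_le_mul_of_nonneg_right (le_max_left _ _) (norm_nonneg _)
      _ = max C 0 * dist a b := by rw [dist_eq_norm]
  exact this.continuous

lemma iter_good {c τ : ℝ} (hc : 0 < c) (hτ : 0 < τ)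
    {u : EuclideanSpace ℝ (Fin N) → ℝ} (hu : ContDiff ℝ 1 u)
    {C₀ C : ℝ} (hub : ∀ z, |u z| ≤ C₀) (hgb : ∀ z, ‖fderiv ℝ u z‖ ≤ C) (m : ℕ) :
    Continuous ((sphMean N (c*τ))^[m] u) ∧
    (∀ z, |((sphMean N (c*τ))^[m] u) z| ≤ C₀) ∧
    (∀ a b, |((sphMean N (c*τ))^[m] u) a - ((sphMean N (c*τ))^[m] u) b| ≤ C * ‖a - b‖) ∧
    ∀ p, Filter.Tendsto
      (fun s => (sphMean N (c*s) ((sphMean N (c*τ))^[m] u) p - ((sphMean N (c*τ))^[m] u) p)/s)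
      (nhdsWithin 0 (Set.Ioi 0)) (nhds 0) := by
  induction m with
  | zero =>
    refine ⟨hu.continuous, hub, ?_, ?_⟩
    · intro a b
      have := convex_univ.norm_image_sub_le_of_norm_fderiv_le (f := u)
        (fun z _ => (hu.differentiable one_ne_zero).differentiableAt)
        (fun z _ => hgb z) (Set.mem_univ b) (Set.mem_univ a)
      simpa [Real.norm_eq_abs] using this
    · exact fun p => base_tendsto hN hc hu hub hgb p
  | succ k ih =>
    obtain ⟨hwc, hwb, hwL, hw⟩ := ih
    simp only [Function.iterate_succ_apply']
    exact ⟨sphMean_cont hN hwc hwb hwL _, fun z => sphMean_bdd hN hwc hwb _ z,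
      sphMean_lip hN hwc hwb hwL _, fun p => step_tendsto hN hc hτ hwc hwb hwL hw p⟩

omit hN

lemma stepIndex_eq {τ : ℝ} (hτ : 0 < τ) (m : ℕ) {s : ℝ} (hs : 0 < s) (hs' : s ≤ τ) :
    stepIndex τ ((m : ℝ) * τ + s) = m := by
  have hx : ((m : ℝ) * τ + s) / τ = m + s / τ := by
    field_simp
  have hceil : ⌈((m : ℝ) * τ + s) / τ⌉₊ = m + 1 := by
    rw [hx, Nat.ceil_eq_iff (Nat.succ_ne_zero m)]
    constructor
    · push_cast
      exact lt_add_of_pos_right _ (div_pos hs hτ)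
    · push_cast
      exact add_le_add_right ((div_le_one hτ).mpr hs') _
  rw [stepIndex, hceil]
  omega

lemma causalDiffusion_at_step {c τ : ℝ} (hc : 0 < c) (hτ : 0 < τ)
    (u : EuclideanSpace ℝ (Fin N) → ℝ) (x : EuclideanSpace ℝ (Fin N)) (m : ℕ) :
    causalDiffusion N c τ u x ((m : ℝ) * τ) = ((sphMean N (c * τ))^[m] u) x := by
  cases m with
  | zero => simp [causalDiffusion]
  | succ k =>
    have ht : (0:ℝ) < ((k+1 : ℕ) : ℝ) * τ := by
      apply mul_pos _ hτ
      exact_mod_cast Nat.succ_pos k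
    rw [causalDiffusion, if_neg (not_le.mpr ht)]
    have hstep : stepIndex τ (((k+1 : ℕ) : ℝ) * τ) = k := by
      have : ((k+1 : ℕ) : ℝ) * τ = (k : ℝ) * τ + τ := by push_cast; ring
      rw [this, stepIndex_eq hτ k hτ le_rfl]
    rw [hstep]
    have harg : c * (((k+1 : ℕ) : ℝ) * τ - (k : ℝ) * τ) = c * τ := by
      push_cast; ring_nf
    rw [harg, Function.iterate_succ_apply']


end Helpers

/-- For `C¹` bounded initial data with bounded gradient, the causal diffusion
`t ↦ v(x,t)` has right-hand derivative `0` at each time point `t = m τ`. -/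
theorem stmt_16 (N : ℕ) (hN : 1 ≤ N) (c τ : ℝ) (hc : 0 < c) (hτ : 0 < τ)
    (u : EuclideanSpace ℝ (Fin N) → ℝ) (hu : ContDiff ℝ 1 u)
    (hub : ∃ C : ℝ, ∀ x, |u x| ≤ C)
    (hgb : ∃ C : ℝ, ∀ x, ‖fderiv ℝ u x‖ ≤ C)
    (x : EuclideanSpace ℝ (Fin N)) (m : ℕ) :
    Filter.Tendsto
      (fun s => (causalDiffusion N c τ u x ((m : ℝ) * τ + s) -
          causalDiffusion N c τ u x ((m : ℝ) * τ)) / s)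
      (nhdsWithin 0 (Set.Ioi 0)) (nhds 0) := by
  obtain ⟨C₀, hub⟩ := hub
  obtain ⟨C, hgb⟩ := hgb
  obtain ⟨hwc, hwb, hwL, hw⟩ := iter_good hN hc hτ hu hub hgb m
  apply Filter.Tendsto.congr' _ (hw x)
  have hIoc : Set.Ioc (0:ℝ) τ ∈ nhdsWithin 0 (Set.Ioi 0) := by
    apply mem_nhdsWithin.mpr
    exact ⟨Set.Iio τ, isOpen_Iio, hτ, fun t ht => ⟨ht.2, le_of_lt ht.1⟩⟩
  filter_upwards [hIoc] with s hs
  have hs0 : 0 < s := hs.1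
  have ht : (0:ℝ) < (m : ℝ) * τ + s := by positivity
  rw [causalDiffusion_at_step hc hτ u x m, causalDiffusion, if_neg (not_le.mpr ht),
    stepIndex_eq hτ m hs0 hs.2]
  congr 2
  ring
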